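/- Let ρ be a real number with 0 < ρ < 1 and define φ_ρ : ℝ → ℝ by φ_ρ(x) = (1 - ρ²)/(1 + ρ² - 2ρ·cos(2πx)). Then for all y, z ∈ ℝ and every integer k ∈ ℤ, |∫_0^1 e^{-2πikx} φ_ρ(x - y) φ_ρ(x - z) dx| ≤ ρ^{|k|} · (|k| + (1 + ρ²)/(1 - ρ²)). -/

import Mathlib

open scoped BigOperators Real
open MeasureTheory

/-- The 1-dimensional Poisson-kernel feature function
`φ_ρ(x) = (1-ρ²)/(1+ρ²-2ρ cos(2πx))`. -/
noncomputable def phiRho (ρ : ℝ) (x : ℝ) : ℝ :=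
  (1 - ρ ^ 2) / (1 + ρ ^ 2 - 2 * ρ * Real.cos (2 * π * x))

lemma denom_pos {ρ : ℝ} (hρ0 : 0 < ρ) (hρ1 : ρ < 1) (x : ℝ) :
    0 < 1 + ρ ^ 2 - 2 * ρ * Real.cos (2 * π * x) := by
  have h := Real.cos_le_one (2 * π * x)
  nlinarith [sq_nonneg (1 - ρ)]

lemma phi_cont {ρ : ℝ} (hρ0 : 0 < ρ) (hρ1 : ρ < 1) : Continuous (phiRho ρ) := by
  apply Continuous.div (by continuity) (by continuity)
  exact fun x => ne_of_gt (denom_pos hρ0 hρ1 x)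

lemma phi_nonneg {ρ : ℝ} (hρ0 : 0 < ρ) (hρ1 : ρ < 1) (x : ℝ) : 0 ≤ phiRho ρ x :=
  div_nonneg (by nlinarith) (le_of_lt (denom_pos hρ0 hρ1 x))

lemma summable_rho {ρ : ℝ} (hρ0 : 0 < ρ) (hρ1 : ρ < 1) :
    Summable (fun n : ℤ => ρ ^ n.natAbs) := by
  apply Summable.of_nat_of_neg_add_one
  · simpa using summable_geometric_of_lt_one hρ0.le hρ1
  · have : Summable (fun n : ℕ => ρ ^ (n + 1)) :=
      (summable_geometric_of_lt_one hρ0.le hρ1).comp_injective (add_left_injective 1)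
    apply this.congr
    intro n
    have h : ((-(↑n+1):ℤ)).natAbs = n + 1 := by omega
    rw [h]

lemma orth (j : ℤ) :
    (∫ x in (0:ℝ)..1, Complex.exp (2 * π * Complex.I * j * x)) =
      if j = 0 then 1 else 0 := by
  by_cases hj : j = 0
  · simp [hj]
  · have hc : (2 * (π:ℂ) * Complex.I * j) ≠ 0 := by
      apply mul_ne_zero
      apply mul_ne_zero
      apply mul_ne_zero
      · norm_num
      · exact_mod_cast Real.pi_ne_zero
      · exact Complex.I_ne_zero
      · exact_mod_cast hj
    have h := integral_exp_mul_complex (a := (0:ℝ)) (b := 1) hc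
    simp only [hj, if_false]
    rw [show (fun x : ℝ => Complex.exp (2 * π * Complex.I * j * x)) =
        (fun x : ℝ => Complex.exp ((2 * π * Complex.I * j) * x)) by ring_nf] at *
    rw [h]
    have : Complex.exp (2 * π * Complex.I * j * (1:ℝ)) = 1 := by
      rw [show (2 * (π:ℂ) * Complex.I * j * (1:ℝ)) = j * (2 * π * Complex.I) by push_cast; ring]
      exact Complex.exp_int_mul_two_pi_mul_I j
    rw [this]
    norm_num

lemma hasSum_phi {ρ : ℝ} (hρ0 : 0 < ρ) (hρ1 : ρ < 1) (x : ℝ) :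
    HasSum (fun n : ℤ => (ρ : ℂ) ^ n.natAbs * Complex.exp (2 * π * Complex.I * n * x))
      ((phiRho ρ x : ℝ) : ℂ) := by
  set w : ℂ := Complex.exp (2 * π * Complex.I * x) with hw
  have hwn : ∀ n : ℤ, Complex.exp (2 * π * Complex.I * n * x) = w ^ n := by
    intro n
    rw [hw, ← Complex.exp_int_mul]
    ring_nf
  have hnorm : ‖w‖ = 1 := by
    rw [hw, Complex.norm_exp]
    norm_num [Complex.mul_re, Complex.mul_im]
  have hρa : |ρ| < 1 := by rw [abs_of_pos hρ0]; exact hρ1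
  have ha : ‖(ρ : ℂ) * w‖ < 1 := by
    simp [map_mul, hnorm, hρa]
  have hb : ‖(ρ : ℂ) * w⁻¹‖ < 1 := by
    simp [map_mul, map_inv₀, hnorm, hρa]
  have hw0 : w ≠ 0 := Complex.exp_ne_zero _
  have h1 : HasSum (fun n : ℕ => ((ρ : ℂ) * w) ^ n) (1 - (ρ:ℂ) * w)⁻¹ :=
    hasSum_geometric_of_norm_lt_one ha
  have h2 : HasSum (fun n : ℕ => ((ρ : ℂ) * w⁻¹) ^ (n + 1))
      ((1 - (ρ:ℂ) * w⁻¹)⁻¹ * ((ρ:ℂ) * w⁻¹)) :=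
    (hasSum_geometric_of_norm_lt_one hb).mul_right _
  have key : HasSum (fun n : ℤ => (ρ : ℂ) ^ n.natAbs * w ^ n)
      ((1 - (ρ:ℂ) * w)⁻¹ + (1 - (ρ:ℂ) * w⁻¹)⁻¹ * ((ρ:ℂ) * w⁻¹)) := by
    apply HasSum.of_nat_of_neg_add_one
    · convert h1 using 1
      funext n
      have e1 : ((n:ℤ)).natAbs = n := by omega
      have e2 : w ^ ((n:ℤ)) = w ^ n := zpow_natCast w n
      rw [mul_pow, e1, e2]
    · convert h2 using 1
      funext n
      show (ρ:ℂ) ^ (-((n:ℤ)+1)).natAbs * w ^ (-((n:ℤ)+1)) = ((ρ:ℂ) * w⁻¹) ^ (n+1)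
      have e1 : (-((n:ℤ)+1)).natAbs = n + 1 := by omega
      have e2 : w ^ (-((n:ℤ)+1)) = (w ^ (n+1))⁻¹ := by
        have h3 : (-((n:ℤ)+1)) = -((n+1 : ℕ) : ℤ) := by push_cast; ring
        rw [h3, zpow_neg, zpow_natCast]
      rw [mul_pow, inv_pow, e1, e2]
  have hfun : (fun n : ℤ => (ρ : ℂ) ^ n.natAbs * Complex.exp (2 * π * Complex.I * n * x)) =
      (fun n : ℤ => (ρ : ℂ) ^ n.natAbs * w ^ n) := by
    funext n; rw [hwn n]
  rw [hfun]
  convert key using 1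
  -- now show φ(x) = closed form
  have hcos : w + w⁻¹ = 2 * (Real.cos (2 * π * x) : ℂ) := by
    rw [hw, ← Complex.exp_neg]
    have : (2 * π * Complex.I * x) = ((2 * π * x : ℝ) : ℂ) * Complex.I := by push_cast; ring
    rw [this, ← neg_mul, Complex.exp_mul_I, Complex.exp_mul_I]
    rw [Complex.cos_neg, Complex.sin_neg, Complex.ofReal_cos]
    ring
  have hDpos := denom_pos hρ0 hρ1 x
  have hD : ((1 + ρ ^ 2 - 2 * ρ * Real.cos (2 * π * x) : ℝ) : ℂ) ≠ 0 := by
    exact_mod_cast ne_of_gt hDpos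
  have hane : (1 : ℂ) - (ρ:ℂ) * w ≠ 0 := by
    intro h
    have : ‖(1:ℂ)‖ = ‖(ρ:ℂ) * w‖ := by rw [sub_eq_zero] at h; rw [h]
    simp at this
    rw [this] at ha
    simp at ha
  have hbne : (1 : ℂ) - (ρ:ℂ) * w⁻¹ ≠ 0 := by
    intro h
    have : ‖(1:ℂ)‖ = ‖(ρ:ℂ) * w⁻¹‖ := by rw [sub_eq_zero] at h; rw [h]
    simp at this
    rw [this] at hb
    simp at hb
  set u : ℂ := w⁻¹ with hu
  have hu1 : w * u = 1 := mul_inv_cancel₀ hw0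
  set c : ℝ := Real.cos (2 * π * x) with hc
  clear_value u
  clear hw
  clear_value w
  have hcos' : w + u = 2 * (c : ℂ) := hcos
  have hden : ((1:ℂ) - ρ * w) * (1 - ρ * u) = ((1 + ρ ^ 2 - 2 * ρ * c : ℝ) : ℂ) := by
    push_cast
    linear_combination (ρ:ℂ)^2 * hu1 - (ρ:ℂ) * hcos'
  have hrhs : ((1:ℂ) - ρ * w)⁻¹ + (1 - (ρ:ℂ) * u)⁻¹ * ((ρ:ℂ) * u) =
      (1 - (ρ:ℂ)^2) / (((1:ℂ) - ρ * w) * (1 - ρ * u)) := by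
    field_simp
    linear_combination (-(ρ:ℂ)^2) * hu1
  rw [hrhs, hden, phiRho]
  rw [hc, Complex.ofReal_div]
  push_cast
  ring

lemma fourierCoeff_phi {ρ : ℝ} (hρ0 : 0 < ρ) (hρ1 : ρ < 1) (m : ℤ) (z : ℝ) :
    (∫ x in (0:ℝ)..1, Complex.exp (-(2 * π * Complex.I) * m * x) * ((phiRho ρ (x - z) : ℝ) : ℂ))
      = (ρ:ℂ) ^ m.natAbs * Complex.exp (-(2 * π * Complex.I) * m * z) := by
  set μ : Measure ℝ := volume.restrict (Set.Ioc (0:ℝ) 1) with hμ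
  set F : ℤ → ℝ → ℂ := fun n x =>
    ((ρ:ℂ) ^ n.natAbs * Complex.exp (2 * π * Complex.I * n * ((x - z : ℝ) : ℂ))) *
      Complex.exp (-(2 * π * Complex.I) * m * x) with hF
  have hptsum : ∀ x : ℝ, HasSum (fun n => F n x)
      (Complex.exp (-(2 * π * Complex.I) * m * x) * ((phiRho ρ (x - z) : ℝ) : ℂ)) := by
    intro x
    have h := (hasSum_phi hρ0 hρ1 (x - z)).mul_right (Complex.exp (-(2 * π * Complex.I) * m * x))
    rwa [mul_comm (((phiRho ρ (x - z) : ℝ) : ℂ))] at h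
  have hcont : ∀ n : ℤ, Continuous (F n) := by
    intro n
    apply Continuous.mul
    apply Continuous.mul
    · exact continuous_const
    · exact Complex.continuous_exp.comp (by continuity)
    · exact Complex.continuous_exp.comp (by continuity)
  have hint : ∀ n : ℤ, Integrable (F n) μ := fun n => (hcont n).integrableOn_Ioc
  have hnorm : ∀ n x, ‖F n x‖ = ρ ^ n.natAbs := by
    intro n x
    rw [hF]
    simp only [norm_mul, Complex.norm_exp]
    have h1 : (2 * ↑π * Complex.I * ↑n * ↑(x - z)).re = 0 := by
      simp [Complex.mul_re, Complex.mul_im]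
    have h2 : (-(2 * ↑π * Complex.I) * ↑m * ↑x).re = 0 := by
      simp [Complex.mul_re, Complex.mul_im]
    rw [h1, h2]
    simp [abs_of_pos hρ0, map_pow]
  have hsumint : Summable fun n : ℤ => ∫ x, ‖F n x‖ ∂μ := by
    have : (fun n : ℤ => ∫ x, ‖F n x‖ ∂μ) = fun n : ℤ => ρ ^ n.natAbs := by
      funext n
      rw [integral_congr_ae (Filter.Eventually.of_forall fun x => hnorm n x)]
      rw [integral_const]
      simp [hμ, Real.volume_Ioc]
    rw [this]
    exact summable_rho hρ0 hρ1
  have hkey := hasSum_integral_of_summable_integral_norm hint hsumint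
  -- each ∫ F n equals (if n = m then ρ^|m| exp(-2πimz) else 0)
  have hFn : ∀ n : ℤ, (∫ x, F n x ∂μ) =
      if n = m then (ρ:ℂ) ^ m.natAbs * Complex.exp (-(2 * π * Complex.I) * m * z) else 0 := by
    intro n
    have hFx : ∀ x : ℝ, F n x =
        ((ρ:ℂ) ^ n.natAbs * Complex.exp (-(2 * π * Complex.I) * n * z)) *
          Complex.exp (2 * π * Complex.I * (n - m) * x) := by
      intro x
      rw [hF]
      simp only [mul_assoc, ← Complex.exp_add]
      congr 2
      push_cast
      ring
    have : (∫ x, F n x ∂μ) =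
        ((ρ:ℂ) ^ n.natAbs * Complex.exp (-(2 * π * Complex.I) * n * z)) *
          ∫ x, Complex.exp (2 * π * Complex.I * (n - m) * x) ∂μ := by
      rw [← integral_const_mul]
      exact integral_congr_ae (Filter.Eventually.of_forall fun x => hFx x)
    rw [this]
    have horth : (∫ x, Complex.exp (2 * π * Complex.I * ((n - m : ℤ)) * x) ∂μ) =
        if (n - m : ℤ) = 0 then 1 else 0 := by
      rw [hμ, ← intervalIntegral.integral_of_le (zero_le_one)]
      exact_mod_cast orth (n - m)
    rw [show ((n:ℂ) - m) = ((n - m : ℤ) : ℂ) by push_cast; ring, horth]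
    by_cases h : n = m
    · simp [h, sub_self]
    · have : ¬ ((n - m : ℤ) = 0) := by omega
      simp [h, this]
  rw [funext hFn] at hkey
  have hval := hkey.unique (hasSum_ite_eq m ((ρ:ℂ) ^ m.natAbs *
    Complex.exp (-(2 * π * Complex.I) * m * z)))
  rw [intervalIntegral.integral_of_le (zero_le_one)]
  rw [← hval]
  apply integral_congr_ae
  filter_upwards with x
  exact ((hptsum x).tsum_eq).symm

lemma hasSum_main {ρ : ℝ} (hρ0 : 0 < ρ) (hρ1 : ρ < 1) (y z : ℝ) (k : ℤ) :
    HasSum (fun n : ℤ => ((ρ:ℂ) ^ n.natAbs * Complex.exp (-(2 * π * Complex.I) * n * y)) *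
        ((ρ:ℂ) ^ (k - n).natAbs * Complex.exp (-(2 * π * Complex.I) * (k - n) * z)))
      (∫ x in (0:ℝ)..1, Complex.exp (-(2 * π * Complex.I) * k * x) *
          ((phiRho ρ (x - y) : ℝ) : ℂ) * ((phiRho ρ (x - z) : ℝ) : ℂ)) := by
  set μ : Measure ℝ := volume.restrict (Set.Ioc (0:ℝ) 1) with hμ
  set F : ℤ → ℝ → ℂ := fun n x =>
    ((ρ:ℂ) ^ n.natAbs * Complex.exp (2 * π * Complex.I * n * ((x - y : ℝ) : ℂ))) *
      (Complex.exp (-(2 * π * Complex.I) * k * x) * ((phiRho ρ (x - z) : ℝ) : ℂ)) with hF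
  have hptsum : ∀ x : ℝ, HasSum (fun n => F n x)
      (((phiRho ρ (x - y) : ℝ) : ℂ) *
        (Complex.exp (-(2 * π * Complex.I) * k * x) * ((phiRho ρ (x - z) : ℝ) : ℂ))) :=
    fun x => (hasSum_phi hρ0 hρ1 (x - y)).mul_right _
  have hcont : ∀ n : ℤ, Continuous (F n) := by
    intro n
    apply Continuous.mul
    · exact (continuous_const.mul (Complex.continuous_exp.comp (by continuity)))
    · apply Continuous.mul
      · exact Complex.continuous_exp.comp (by continuity)
      · exact Complex.continuous_ofReal.comp ((phi_cont hρ0 hρ1).comp (by continuity))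
  have hint : ∀ n : ℤ, Integrable (F n) μ := fun n => (hcont n).integrableOn_Ioc
  have hnorm : ∀ n x, ‖F n x‖ = ρ ^ n.natAbs * phiRho ρ (x - z) := by
    intro n x
    rw [hF]
    simp only [norm_mul, Complex.norm_exp]
    have h1 : (2 * ↑π * Complex.I * ↑n * ((x - y : ℝ) : ℂ)).re = 0 := by
      simp [Complex.mul_re, Complex.mul_im]
    have h2 : (-(2 * ↑π * Complex.I) * ↑k * ↑x).re = 0 := by
      simp [Complex.mul_re, Complex.mul_im]
    rw [h1, h2]
    simp only [Real.exp_zero, norm_pow, Complex.norm_real, Real.norm_eq_abs, abs_of_pos hρ0]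
    rw [_root_.abs_of_nonneg (phi_nonneg hρ0 hρ1 (x - z))]
    ring
  have hsumint : Summable fun n : ℤ => ∫ x, ‖F n x‖ ∂μ := by
    have : (fun n : ℤ => ∫ x, ‖F n x‖ ∂μ) =
        fun n : ℤ => ρ ^ n.natAbs * ∫ x, phiRho ρ (x - z) ∂μ := by
      funext n
      rw [← integral_const_mul]
      exact integral_congr_ae (Filter.Eventually.of_forall fun x => hnorm n x)
    rw [this]
    exact (summable_rho hρ0 hρ1).mul_right _
  have hkey := hasSum_integral_of_summable_integral_norm hint hsumint
  have hFn : ∀ n : ℤ, (∫ x, F n x ∂μ) =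
      ((ρ:ℂ) ^ n.natAbs * Complex.exp (-(2 * π * Complex.I) * n * y)) *
        ((ρ:ℂ) ^ (k - n).natAbs * Complex.exp (-(2 * π * Complex.I) * (k - n) * z)) := by
    intro n
    have hFx : ∀ x : ℝ, F n x =
        ((ρ:ℂ) ^ n.natAbs * Complex.exp (-(2 * π * Complex.I) * n * y)) *
          (Complex.exp (-(2 * π * Complex.I) * ((k - n : ℤ) : ℂ) * x) *
            ((phiRho ρ (x - z) : ℝ) : ℂ)) := by
      intro x
      rw [hF]
      have : Complex.exp (2 * π * Complex.I * n * ((x - y : ℝ) : ℂ)) *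
          Complex.exp (-(2 * π * Complex.I) * k * x) =
          Complex.exp (-(2 * π * Complex.I) * n * y) *
            Complex.exp (-(2 * π * Complex.I) * ((k - n : ℤ) : ℂ) * x) := by
        rw [← Complex.exp_add, ← Complex.exp_add]
        congr 1
        push_cast
        ring
      calc ((ρ:ℂ) ^ n.natAbs * Complex.exp (2 * π * Complex.I * n * ((x - y : ℝ) : ℂ))) *
            (Complex.exp (-(2 * π * Complex.I) * k * x) * ((phiRho ρ (x - z) : ℝ) : ℂ))
          = (ρ:ℂ) ^ n.natAbs * (Complex.exp (2 * π * Complex.I * n * ((x - y : ℝ) : ℂ)) *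
              Complex.exp (-(2 * π * Complex.I) * k * x)) * ((phiRho ρ (x - z) : ℝ) : ℂ) := by
            ring
        _ = _ := by rw [this]; ring
    rw [integral_congr_ae (Filter.Eventually.of_forall hFx), integral_const_mul]
    have h2 := fourierCoeff_phi hρ0 hρ1 (k - n) z
    rw [intervalIntegral.integral_of_le (zero_le_one)] at h2
    rw [← hμ] at h2
    congr 1
    push_cast at h2 ⊢
    rw [h2]
  rw [funext hFn] at hkey
  convert hkey using 1
  · rfl
  rw [intervalIntegral.integral_of_le (zero_le_one), ← hμ]
  apply integral_congr_ae
  filter_upwards with x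
  rw [(hptsum x).tsum_eq]
  ring

set_option maxHeartbeats 1000000 in
lemma hasSum_bound_nat {ρ : ℝ} (hρ0 : 0 < ρ) (hρ1 : ρ < 1) (K : ℕ) :
    HasSum (fun n : ℤ => ρ ^ (n.natAbs + ((K:ℤ) - n).natAbs))
      (ρ ^ K * ((K : ℝ) + (1 + ρ ^ 2) / (1 - ρ ^ 2))) := by
  have hq0 : (0:ℝ) ≤ ρ ^ 2 := sq_nonneg ρ
  have hq1 : ρ ^ 2 < 1 := by nlinarith
  have hne : (1:ℝ) - ρ ^ 2 ≠ 0 := by nlinarith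
  have hgeo : HasSum (fun m : ℕ => ρ ^ (K + 2) * (ρ ^ 2) ^ m)
      (ρ ^ (K + 2) * (1 - ρ ^ 2)⁻¹) :=
    (hasSum_geometric_of_lt_one hq0 hq1).mul_left _
  have hexp : ∀ m : ℕ, ρ ^ (K + 2) * (ρ ^ 2) ^ m = ρ ^ (K + 2 + 2 * m) := by
    intro m
    rw [pow_add (a := ρ) (m := K + 2), ← pow_mul]
  have hneg : HasSum (fun m : ℕ => ρ ^ ((-((m:ℤ) + 1) : ℤ).natAbs + ((K:ℤ) - (-((m:ℤ) + 1))).natAbs))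
      (ρ ^ (K + 2) * (1 - ρ ^ 2)⁻¹) := by
    refine hgeo.congr_fun fun m => ?_
    rw [hexp m]
    congr 1
    omega
  have htail : HasSum (fun m : ℕ => ρ ^ ((((m + (K + 1) : ℕ) : ℤ)).natAbs +
      ((K:ℤ) - ((m + (K + 1) : ℕ) : ℤ)).natAbs)) (ρ ^ (K + 2) * (1 - ρ ^ 2)⁻¹) := by
    refine hgeo.congr_fun fun m => ?_
    rw [hexp m]
    congr 1
    omega
  have hnat : HasSum (fun n : ℕ => ρ ^ ((n : ℤ).natAbs + ((K:ℤ) - (n : ℤ)).natAbs))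
      (ρ ^ (K + 2) * (1 - ρ ^ 2)⁻¹ + (K + 1) * ρ ^ K) := by
    have h := (hasSum_nat_add_iff (f := fun n : ℕ =>
      ρ ^ ((n : ℤ).natAbs + ((K:ℤ) - (n : ℤ)).natAbs)) (K + 1)).mp htail
    convert h using 1
    · rfl
    have hterm : ∀ i ∈ Finset.range (K + 1),
        ρ ^ ((i : ℤ).natAbs + ((K:ℤ) - (i : ℤ)).natAbs) = ρ ^ K := by
      intro i hi
      have hi' : i ≤ K := by have := Finset.mem_range.mp hi; omega
      congr 1
      omega
    rw [Finset.sum_congr rfl hterm, Finset.sum_const, Finset.card_range, nsmul_eq_mul]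
    push_cast
    ring
  have htotal := HasSum.of_nat_of_neg_add_one (f := fun n : ℤ => ρ ^ (n.natAbs + ((K:ℤ) - n).natAbs)) hnat hneg
  convert htotal using 1
  field_simp
  ring

lemma hasSum_bound_int {ρ : ℝ} (hρ0 : 0 < ρ) (hρ1 : ρ < 1) (k : ℤ) :
    HasSum (fun n : ℤ => ρ ^ (n.natAbs + (k - n).natAbs))
      (ρ ^ k.natAbs * ((k.natAbs : ℝ) + (1 + ρ ^ 2) / (1 - ρ ^ 2))) := by
  rcases le_or_gt 0 k with hk | hk
  · have : k = (k.natAbs : ℤ) := by omega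
    rw [this]
    exact hasSum_bound_nat hρ0 hρ1 k.natAbs
  · have hK := hasSum_bound_nat hρ0 hρ1 k.natAbs
    have h2 := ((Equiv.neg ℤ).hasSum_iff).mpr hK
    have hval : k.natAbs = (-k).natAbs := by omega
    refine HasSum.congr_fun h2 fun n => ?_
    show ρ ^ (n.natAbs + (k - n).natAbs) = ρ ^ ((-n : ℤ).natAbs + ((k.natAbs : ℤ) - (-n)).natAbs)
    congr 1
    omega

/-- Appendix E of the paper: for `0 < ρ < 1`, all `y, z ∈ ℝ` and `k ∈ ℤ`,
`|∫_0^1 e^{-2πikx} φ_ρ(x-y) φ_ρ(x-z) dx| ≤ ρ^{|k|} (|k| + (1+ρ²)/(1-ρ²))`. -/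
theorem stmt_19 (ρ : ℝ) (hρ0 : 0 < ρ) (hρ1 : ρ < 1) (y z : ℝ) (k : ℤ) :
    ‖∫ x in (0 : ℝ)..1,
        Complex.exp (-(2 * (π : ℂ) * Complex.I) * (k : ℂ) * (x : ℂ)) *
          ((phiRho ρ (x - y) : ℝ) : ℂ) * ((phiRho ρ (x - z) : ℝ) : ℂ)‖ ≤
      ρ ^ k.natAbs * ((k.natAbs : ℝ) + (1 + ρ ^ 2) / (1 - ρ ^ 2)) := by
  have h := hasSum_main hρ0 hρ1 y z k
  set term : ℤ → ℂ := fun n =>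
    ((ρ:ℂ) ^ n.natAbs * Complex.exp (-(2 * π * Complex.I) * n * y)) *
      ((ρ:ℂ) ^ (k - n).natAbs * Complex.exp (-(2 * π * Complex.I) * (k - n) * z)) with hterm
  have hnorm : ∀ n : ℤ, ‖term n‖ = ρ ^ (n.natAbs + (k - n).natAbs) := by
    intro n
    rw [hterm]
    simp only [norm_mul, Complex.norm_exp, norm_pow, Complex.norm_real]
    have h1 : (-(2 * ↑π * Complex.I) * (n:ℂ) * (y:ℂ)).re = 0 := by
      simp [Complex.mul_re, Complex.mul_im]
    have h2 : (-(2 * ↑π * Complex.I) * ((k:ℂ) - (n:ℂ)) * (z:ℂ)).re = 0 := by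
      simp [Complex.mul_re, Complex.mul_im]
    rw [h1, h2, pow_add]
    simp [abs_of_pos hρ0]
  have hb := hasSum_bound_int hρ0 hρ1 k
  have hsumnorm : Summable fun n : ℤ => ‖term n‖ := by
    rw [funext hnorm]
    exact hb.summable
  rw [← h.tsum_eq]
  calc ‖∑' n, term n‖ ≤ ∑' n, ‖term n‖ := norm_tsum_le_tsum_norm hsumnorm
    _ = ρ ^ k.natAbs * ((k.natAbs : ℝ) + (1 + ρ ^ 2) / (1 - ρ ^ 2)) := by
        rw [funext hnorm]
        exact hb.tsum_eq
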